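/- Let C ⊆ ℝⁿ be a nonempty convex set and F ∈ C¹(C; ℝⁿ) such that the Jacobian matrix F'(x) is positive definite (or negative definite) at every point x ∈ C. Then F is injective on C. -/

import Mathlib

open Set

private lemma gale_nikaido_pos
    {n : ℕ} {C : Set (EuclideanSpace ℝ (Fin n))}
    (hC : Convex ℝ C)
    (F : EuclideanSpace ℝ (Fin n) → EuclideanSpace ℝ (Fin n))
    (F' : EuclideanSpace ℝ (Fin n) →
      EuclideanSpace ℝ (Fin n) →L[ℝ] EuclideanSpace ℝ (Fin n))
    (hderiv : ∀ x ∈ C, HasFDerivWithinAt F (F' x) C x)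
    (hpos : ∀ x ∈ C, ∀ c : EuclideanSpace ℝ (Fin n), c ≠ 0 →
        0 < (inner ℝ (F' x c) c : ℝ)) :
    Set.InjOn F C := by
  intro x hx y hy hxy
  by_contra hne
  set v : EuclideanSpace ℝ (Fin n) := y - x with hv
  have hv0 : v ≠ 0 := sub_ne_zero.mpr (Ne.symm hne)
  set γ : ℝ → EuclideanSpace ℝ (Fin n) := fun t => x + t • v with hγ
  have hmaps : MapsTo γ (Icc (0:ℝ) 1) C := fun t ht => hC.add_smul_sub_mem hx hy ht
  set L : EuclideanSpace ℝ (Fin n) →L[ℝ] ℝ := innerSL ℝ v with hL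
  set φ : ℝ → ℝ := fun t => L (F (γ t)) with hφ
  have hγd : ∀ t : ℝ, ∀ s : Set ℝ, HasDerivWithinAt γ v s t := by
    intro t s
    have : HasDerivAt γ v t := by
      simpa [hγ] using ((hasDerivAt_id t).smul_const v).const_add x
    exact this.hasDerivWithinAt
  have hφd : ∀ t ∈ Icc (0:ℝ) 1,
      HasDerivWithinAt φ (inner ℝ (F' (γ t) v) v : ℝ) (Icc (0:ℝ) 1) t := by
    intro t ht
    have h1 : HasDerivWithinAt (fun u => F (γ u)) (F' (γ t) v) (Icc (0:ℝ) 1) t :=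
      (hderiv (γ t) (hmaps ht)).comp_hasDerivWithinAt t (hγd t _) hmaps
    have h2 := (L.hasFDerivAt.comp_hasDerivWithinAt t h1 : HasDerivWithinAt
      (fun u => L (F (γ u))) (L (F' (γ t) v)) (Icc (0:ℝ) 1) t)
    have he : L ((F' (γ t)) v) = (inner ℝ (F' (γ t) v) v : ℝ) := by
      rw [hL, innerSL_apply_apply, real_inner_comm]
    rw [← he]
    exact h2
  have hmono : StrictMonoOn φ (Icc (0:ℝ) 1) := by
    apply strictMonoOn_of_hasDerivWithinAt_pos (convex_Icc 0 1)
      (fun t ht => (hφd t ht).continuousWithinAt)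
    · intro t ht
      rw [interior_Icc] at ht ⊢
      exact ((hφd t (Ioo_subset_Icc_self ht)).mono Ioo_subset_Icc_self)
    · intro t ht
      rw [interior_Icc] at ht
      exact hpos (γ t) (hmaps (Ioo_subset_Icc_self ht)) v hv0
  have h01 : φ 0 < φ 1 := hmono (left_mem_Icc.mpr zero_le_one)
    (right_mem_Icc.mpr zero_le_one) zero_lt_one
  have hγ0 : γ 0 = x := by simp [hγ]
  have hγ1 : γ 1 = y := by simp [hγ, hv]
  rw [hφ] at h01
  simp only [hγ0, hγ1, hxy] at h01
  exact lt_irrefl _ h01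

/-- Gale–Nikaido theorem: a C¹ map on a convex set whose Jacobian is everywhere
positive definite (or everywhere negative definite) is injective. -/
theorem gale_nikaido
    {n : ℕ} {C : Set (EuclideanSpace ℝ (Fin n))}
    (hC : Convex ℝ C) (hne : C.Nonempty)
    (F : EuclideanSpace ℝ (Fin n) → EuclideanSpace ℝ (Fin n))
    (F' : EuclideanSpace ℝ (Fin n) →
      EuclideanSpace ℝ (Fin n) →L[ℝ] EuclideanSpace ℝ (Fin n))
    (hderiv : ∀ x ∈ C, HasFDerivWithinAt F (F' x) C x)
    (hcont : ContinuousOn F' C)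
    (hdef : (∀ x ∈ C, ∀ c : EuclideanSpace ℝ (Fin n), c ≠ 0 →
        0 < (inner ℝ (F' x c) c : ℝ)) ∨
      (∀ x ∈ C, ∀ c : EuclideanSpace ℝ (Fin n), c ≠ 0 →
        (inner ℝ (F' x c) c : ℝ) < 0)) :
    Set.InjOn F C := by
  rcases hdef with hpos | hneg
  · exact gale_nikaido_pos hC F F' hderiv hpos
  · have hinj : Set.InjOn (fun z => -F z) C := by
      apply gale_nikaido_pos hC _ (fun x => -(F' x))
        (fun x hx => (hderiv x hx).neg)
      intro x hx c hc
      have := hneg x hx c hc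
      simpa [inner_neg_left] using neg_pos.mpr this
    intro a ha b hb hab
    exact hinj ha hb (by simp [hab])
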